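/- Let (X,d) be a Polish metric space, x₀ ∈ X, η ≥ 1, p ∈ [1,η], and let μ, ν be Borel probability measures on X with finite η-th moments M_μ = ∫ d(x,x₀)^η μ(dx) and M_ν = ∫ d(x,x₀)^η ν(dx). Then for every t > 0, W_p(μ,ν)^p ≤ (2t)^{p−1} · W₁(μ,ν) + 2^{p+1} · t^{p−η} · (M_μ + M_ν). -/

import Mathlib

open MeasureTheory ProbabilityTheory Filter ENNReal

noncomputable def wassersteinE {X : Type*} [MeasurableSpace X] [PseudoEMetricSpace X]
    (p : ℝ) (μ ν : Measure X) : ℝ≥0∞ :=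
  (⨅ (π : Measure (X × X)) (_ : π.map Prod.fst = μ ∧ π.map Prod.snd = ν),
    ∫⁻ z, edist z.1 z.2 ^ p ∂π) ^ (1 / p)

noncomputable def wasserstein {X : Type*} [MeasurableSpace X] [PseudoEMetricSpace X]
    (p : ℝ) (μ ν : Measure X) : ℝ :=
  (wassersteinE p μ ν).toReal

/-- The key pointwise real inequality. -/
lemma aux_pointwise_real {η p t d a b : ℝ} (hη : 1 ≤ η) (hp1 : 1 ≤ p) (hpη : p ≤ η)
    (ht : 0 < t) (hd : 0 ≤ d) (ha : 0 ≤ a) (hb : 0 ≤ b) (hdab : d ≤ a + b) :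
    d ^ p ≤ (2 * t) ^ (p - 1) * d + 2 ^ p * t ^ (p - η) * (a ^ η + b ^ η) := by
  have h2t : (0:ℝ) < 2 * t := by linarith
  have hη0 : (0:ℝ) ≤ η := by linarith
  have habη : (a + b) ^ η ≤ 2 ^ η * (a ^ η + b ^ η) := by
    rcases le_total a b with h | h
    · calc (a + b) ^ η ≤ (2 * b) ^ η :=
            Real.rpow_le_rpow (by linarith) (by linarith) hη0
        _ = 2 ^ η * b ^ η := Real.mul_rpow (by norm_num) hb
        _ ≤ 2 ^ η * (a ^ η + b ^ η) := by
            have h1 : (0:ℝ) ≤ a ^ η := Real.rpow_nonneg ha η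
            have h2 : (0:ℝ) ≤ (2:ℝ) ^ η := Real.rpow_nonneg (by norm_num) η
            nlinarith
    · calc (a + b) ^ η ≤ (2 * a) ^ η :=
            Real.rpow_le_rpow (by linarith) (by linarith) hη0
        _ = 2 ^ η * a ^ η := Real.mul_rpow (by norm_num) ha
        _ ≤ 2 ^ η * (a ^ η + b ^ η) := by
            have h1 : (0:ℝ) ≤ b ^ η := Real.rpow_nonneg hb η
            have h2 : (0:ℝ) ≤ (2:ℝ) ^ η := Real.rpow_nonneg (by norm_num) η
            nlinarith
  rcases le_or_gt d (2 * t) with hcase | hcase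
  · have term2 : (0:ℝ) ≤ 2 ^ p * t ^ (p - η) * (a ^ η + b ^ η) := by
      have h1 : (0:ℝ) ≤ a ^ η := Real.rpow_nonneg ha η
      have h2 : (0:ℝ) ≤ b ^ η := Real.rpow_nonneg hb η
      have h3 : (0:ℝ) ≤ (2:ℝ) ^ p := Real.rpow_nonneg (by norm_num) p
      have h4 : (0:ℝ) ≤ t ^ (p - η) := Real.rpow_nonneg ht.le _
      positivity
    rcases eq_or_lt_of_le hd with h0 | h0
    · rw [← h0, Real.zero_rpow (by linarith : p ≠ 0)]
      have : (0:ℝ) ≤ (2*t) ^ (p-1) * d := by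
        rw [← h0]; simp
      linarith
    · have e0 : d ^ p = d ^ (p - 1) * d := by
        rw [← Real.rpow_add_one h0.ne' (p - 1), sub_add_cancel]
      calc d ^ p = d ^ (p - 1) * d := e0
        _ ≤ (2 * t) ^ (p - 1) * d :=
            mul_le_mul_of_nonneg_right (Real.rpow_le_rpow hd hcase (by linarith)) hd
        _ ≤ _ := le_add_of_nonneg_right term2
  · have hd0 : (0:ℝ) < d := lt_trans h2t hcase
    have e1 : d ^ p = d ^ (p - η) * d ^ η := by
      rw [← Real.rpow_add hd0, sub_add_cancel]
    have e2 : d ^ (p - η) ≤ (2 * t) ^ (p - η) :=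
      Real.rpow_le_rpow_of_nonpos h2t hcase.le (by linarith)
    have e3 : d ^ η ≤ 2 ^ η * (a ^ η + b ^ η) :=
      (Real.rpow_le_rpow hd hdab hη0).trans habη
    have e4 : (2:ℝ) ^ (p - η) * 2 ^ η = 2 ^ p := by
      rw [← Real.rpow_add (by norm_num : (0:ℝ) < 2), sub_add_cancel]
    have hne : (0:ℝ) ≤ 2 ^ η * (a ^ η + b ^ η) := by
      have h1 : (0:ℝ) ≤ a ^ η := Real.rpow_nonneg ha η
      have h2 : (0:ℝ) ≤ b ^ η := Real.rpow_nonneg hb η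
      have h3 : (0:ℝ) ≤ (2:ℝ) ^ η := Real.rpow_nonneg (by norm_num) η
      positivity
    have term1 : (0:ℝ) ≤ (2 * t) ^ (p - 1) * d := by positivity
    calc d ^ p = d ^ (p - η) * d ^ η := e1
      _ ≤ (2 * t) ^ (p - η) * (2 ^ η * (a ^ η + b ^ η)) :=
          mul_le_mul e2 e3 (Real.rpow_nonneg hd0.le _) (Real.rpow_nonneg h2t.le _)
      _ = 2 ^ p * t ^ (p - η) * (a ^ η + b ^ η) := by
          rw [Real.mul_rpow (by norm_num : (0:ℝ) ≤ 2) ht.le, ← e4]; ring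
      _ ≤ _ := le_add_of_nonneg_left (by positivity)

theorem Wp_le_of_W1_and_moments
    {X : Type*} [MeasurableSpace X] [MetricSpace X] [BorelSpace X] [PolishSpace X]
    (x₀ : X) (η p : ℝ) (hη : 1 ≤ η) (hp1 : 1 ≤ p) (hpη : p ≤ η)
    (μ ν : Measure X) [IsProbabilityMeasure μ] [IsProbabilityMeasure ν]
    (hμ : Integrable (fun x => dist x x₀ ^ η) μ)
    (hν : Integrable (fun x => dist x x₀ ^ η) ν) :
    ∀ t : ℝ, 0 < t →
      wasserstein p μ ν ^ p ≤
        (2 * t) ^ (p - 1) * wasserstein 1 μ ν +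
          2 ^ (p + 1) * t ^ (p - η) *
            ((∫ x, dist x x₀ ^ η ∂μ) + ∫ x, dist x x₀ ^ η ∂ν) := by
  intro t ht
  have hp0 : (0:ℝ) < p := lt_of_lt_of_le one_pos hp1
  have hη0 : (0:ℝ) ≤ η := by linarith
  set Mμ : ℝ := ∫ x, dist x x₀ ^ η ∂μ with hMμdef
  set Mν : ℝ := ∫ x, dist x x₀ ^ η ∂ν with hMνdef
  have hMμ0 : 0 ≤ Mμ := integral_nonneg fun x => Real.rpow_nonneg dist_nonneg _
  have hMν0 : 0 ≤ Mν := integral_nonneg fun x => Real.rpow_nonneg dist_nonneg _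
  set C : ℝ≥0∞ := ENNReal.ofReal ((2 * t) ^ (p - 1)) with hCdef
  set D : ℝ≥0∞ := ENNReal.ofReal (2 ^ p * t ^ (p - η)) with hDdef
  set K : ℝ≥0∞ := D * (ENNReal.ofReal Mμ + ENNReal.ofReal Mν) with hKdef
  -- measurability facts
  have m1 : Measurable fun z : X × X => edist z.1 z.2 := continuous_edist.measurable
  have mf : Measurable fun x : X => edist x x₀ ^ η :=
    (ENNReal.continuous_rpow_const.comp (continuous_id.edist continuous_const)).measurable
  have mf1 : Measurable fun x : X => edist x x₀ :=
    (continuous_id.edist continuous_const).measurable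
  have m2 : Measurable fun z : X × X => edist z.1 x₀ ^ η := mf.comp measurable_fst
  have mg1 : Measurable fun z : X × X => edist z.1 x₀ := mf1.comp measurable_fst
  have m3 : Measurable fun z : X × X => edist z.2 x₀ ^ η := mf.comp measurable_snd
  -- moment identities
  have point : ∀ x : X, edist x x₀ ^ η = ENNReal.ofReal (dist x x₀ ^ η) := fun x => by
    rw [edist_dist, ENNReal.ofReal_rpow_of_nonneg dist_nonneg hη0]
  have hμ'' : ∫⁻ x, edist x x₀ ^ η ∂μ = ENNReal.ofReal Mμ := by
    simp_rw [point]
    exact (ofReal_integral_eq_lintegral_ofReal hμ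
      (ae_of_all _ fun x => Real.rpow_nonneg dist_nonneg _)).symm
  have hν'' : ∫⁻ x, edist x x₀ ^ η ∂ν = ENNReal.ofReal Mν := by
    simp_rw [point]
    exact (ofReal_integral_eq_lintegral_ofReal hν
      (ae_of_all _ fun x => Real.rpow_nonneg dist_nonneg _)).symm
  -- pointwise ENNReal inequality
  have epoint : ∀ z : X × X, edist z.1 z.2 ^ p ≤
      C * edist z.1 z.2 + D * (edist z.1 x₀ ^ η + edist z.2 x₀ ^ η) := by
    intro z
    have hreal := aux_pointwise_real hη hp1 hpη ht (dist_nonneg (x := z.1) (y := z.2))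
      (dist_nonneg (x := z.1) (y := x₀)) (dist_nonneg (x := z.2) (y := x₀))
      (dist_triangle_right z.1 z.2 x₀)
    simp only [edist_dist]
    rw [ENNReal.ofReal_rpow_of_nonneg dist_nonneg hp0.le,
      ENNReal.ofReal_rpow_of_nonneg dist_nonneg hη0,
      ENNReal.ofReal_rpow_of_nonneg dist_nonneg hη0, hCdef, hDdef,
      ← ENNReal.ofReal_add (Real.rpow_nonneg dist_nonneg _) (Real.rpow_nonneg dist_nonneg _),
      ← ENNReal.ofReal_mul (by positivity : (0:ℝ) ≤ 2 ^ p * t ^ (p - η)),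
      ← ENNReal.ofReal_mul (by positivity : (0:ℝ) ≤ (2 * t) ^ (p - 1)),
      ← ENNReal.ofReal_add (by positivity) (by positivity)]
    exact ENNReal.ofReal_le_ofReal hreal
  -- key coupling estimate
  have key : ∀ π : Measure (X × X), π.map Prod.fst = μ → π.map Prod.snd = ν →
      ∫⁻ z, edist z.1 z.2 ^ p ∂π ≤ C * ∫⁻ z, edist z.1 z.2 ∂π + K := by
    intro π h1 h2
    have marg1 : ∫⁻ z, edist z.1 x₀ ^ η ∂π = ENNReal.ofReal Mμ := by
      have := lintegral_map mf measurable_fst (μ := π)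
      rw [h1] at this
      rw [← this, hμ'']
    have marg2 : ∫⁻ z, edist z.2 x₀ ^ η ∂π = ENNReal.ofReal Mν := by
      have := lintegral_map mf measurable_snd (μ := π)
      rw [h2] at this
      rw [← this, hν'']
    calc ∫⁻ z, edist z.1 z.2 ^ p ∂π
        ≤ ∫⁻ z, (C * edist z.1 z.2 + D * (edist z.1 x₀ ^ η + edist z.2 x₀ ^ η)) ∂π :=
          lintegral_mono epoint
      _ = C * ∫⁻ z, edist z.1 z.2 ∂π + D * (∫⁻ z, edist z.1 x₀ ^ η ∂π + ∫⁻ z, edist z.2 x₀ ^ η ∂π) := by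
          rw [lintegral_add_left (m1.const_mul C), lintegral_const_mul C m1,
            lintegral_const_mul D (f := fun z : X × X => edist z.1 x₀ ^ η + edist z.2 x₀ ^ η) (m2.add m3), lintegral_add_left m2]
      _ = C * ∫⁻ z, edist z.1 z.2 ∂π + K := by rw [marg1, marg2]
  -- the couplings
  set P : Measure (X × X) → Prop := fun π => π.map Prod.fst = μ ∧ π.map Prod.snd = ν with hPdef
  have hprod : P (μ.prod ν) := by
    constructor <;> simp [hPdef, Measure.map_fst_prod, Measure.map_snd_prod, measure_univ]
  haveI hne : Nonempty (Subtype P) := ⟨⟨μ.prod ν, hprod⟩⟩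
  set A : ℝ≥0∞ := ⨅ s : Subtype P, ∫⁻ z, edist z.1 z.2 ^ p ∂s.1 with hAdef
  set B : ℝ≥0∞ := ⨅ s : Subtype P, ∫⁻ z, edist z.1 z.2 ∂s.1 with hBdef
  have hC0 : C ≠ 0 := by
    simp only [hCdef, ne_eq, ENNReal.ofReal_eq_zero, not_le]
    positivity
  have hCtop : C ≠ ⊤ := ENNReal.ofReal_ne_top
  have hKtop : K ≠ ⊤ :=
    ENNReal.mul_ne_top ENNReal.ofReal_ne_top
      (ENNReal.add_ne_top.mpr ⟨ENNReal.ofReal_ne_top, ENNReal.ofReal_ne_top⟩)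
  -- main ENNReal estimate
  have hAB : A ≤ C * B + K := by
    have h1 : A ≤ ⨅ s : Subtype P, (C * ∫⁻ z, edist z.1 z.2 ∂s.1 + K) :=
      le_iInf fun s => le_trans (iInf_le _ s) (key s.1 s.2.1 s.2.2)
    have h2 : C * B + K = ⨅ s : Subtype P, (C * ∫⁻ z, edist z.1 z.2 ∂s.1 + K) := by
      rw [hBdef, ENNReal.mul_iInf_of_ne hC0 hCtop, ENNReal.iInf_add]
    rw [h2]; exact h1
  -- B is finite
  have one_add : ∀ e : ℝ≥0∞, e ≤ 1 + e ^ η := by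
    intro e
    rcases le_total e 1 with h | h
    · exact h.trans le_self_add
    · calc e = e ^ (1:ℝ) := (ENNReal.rpow_one e).symm
        _ ≤ e ^ η := ENNReal.rpow_le_rpow_of_exponent_le h hη
        _ ≤ 1 + e ^ η := le_add_self
  have moment1μ : ∫⁻ x, edist x x₀ ∂μ ≤ 1 + ENNReal.ofReal Mμ := by
    calc ∫⁻ x, edist x x₀ ∂μ ≤ ∫⁻ x, (1 + edist x x₀ ^ η) ∂μ :=
        lintegral_mono fun x => one_add _
      _ = 1 + ENNReal.ofReal Mμ := by
        rw [lintegral_add_left measurable_const, lintegral_const, hμ'', measure_univ, mul_one]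
  have moment1ν : ∫⁻ x, edist x x₀ ∂ν ≤ 1 + ENNReal.ofReal Mν := by
    calc ∫⁻ x, edist x x₀ ∂ν ≤ ∫⁻ x, (1 + edist x x₀ ^ η) ∂ν :=
        lintegral_mono fun x => one_add _
      _ = 1 + ENNReal.ofReal Mν := by
        rw [lintegral_add_left measurable_const, lintegral_const, hν'', measure_univ, mul_one]
  have hBtop : B ≠ ⊤ := by
    have hBle : B ≤ (1 + ENNReal.ofReal Mμ) + (1 + ENNReal.ofReal Mν) := by
      refine le_trans (iInf_le _ (⟨μ.prod ν, hprod⟩ : Subtype P)) ?_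
      have step : ∫⁻ z, edist z.1 z.2 ∂(μ.prod ν) ≤
          ∫⁻ z : X × X, (edist z.1 x₀ + edist z.2 x₀) ∂(μ.prod ν) :=
        lintegral_mono fun z => edist_triangle_right z.1 z.2 x₀
      refine step.trans ?_
      rw [lintegral_add_left mg1]
      have e1 : ∫⁻ z : X × X, edist z.1 x₀ ∂(μ.prod ν) = ∫⁻ x, edist x x₀ ∂μ := by
        have := lintegral_map mf1 (measurable_fst (α := X) (β := X)) (μ := μ.prod ν)
        rw [Measure.map_fst_prod, measure_univ, one_smul] at this
        rw [← this]
      have e2 : ∫⁻ z : X × X, edist z.2 x₀ ∂(μ.prod ν) = ∫⁻ x, edist x x₀ ∂ν := by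
        have := lintegral_map mf1 (measurable_snd (α := X) (β := X)) (μ := μ.prod ν)
        rw [Measure.map_snd_prod, measure_univ, one_smul] at this
        rw [← this]
      rw [e1, e2]
      exact add_le_add moment1μ moment1ν
    exact ne_top_of_le_ne_top (by simp [ENNReal.add_ne_top]) hBle
  have hAtop : A ≠ ⊤ :=
    ne_top_of_le_ne_top (ENNReal.add_ne_top.mpr
      ⟨ENNReal.mul_ne_top hCtop hBtop, hKtop⟩) hAB
  -- identify wasserstein with A, B
  have hEA : wassersteinE p μ ν = A ^ (1 / p) := by
    rw [wassersteinE, iInf_subtype', hAdef]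
  have hEB : wassersteinE 1 μ ν = B := by
    rw [wassersteinE]
    simp only [ENNReal.rpow_one, one_div_one]
    rw [iInf_subtype', hBdef]
  have hW1 : wasserstein 1 μ ν = B.toReal := by rw [wasserstein, hEB]
  have hWp : wasserstein p μ ν ^ p = A.toReal := by
    rw [wasserstein, hEA, ENNReal.toReal_rpow, ← ENNReal.rpow_mul,
      one_div_mul_cancel hp0.ne', ENNReal.rpow_one]
  rw [hWp, hW1]
  -- pass to real numbers
  have hfinal : A.toReal ≤ (2 * t) ^ (p - 1) * B.toReal + 2 ^ p * t ^ (p - η) * (Mμ + Mν) := by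
    have h1 : A.toReal ≤ (C * B + K).toReal :=
      ENNReal.toReal_mono (ENNReal.add_ne_top.mpr
        ⟨ENNReal.mul_ne_top hCtop hBtop, hKtop⟩) hAB
    have h2 : (C * B + K).toReal = (2 * t) ^ (p - 1) * B.toReal + 2 ^ p * t ^ (p - η) * (Mμ + Mν) := by
      rw [ENNReal.toReal_add (ENNReal.mul_ne_top hCtop hBtop) hKtop, ENNReal.toReal_mul,
        hKdef, ENNReal.toReal_mul, ENNReal.toReal_add ENNReal.ofReal_ne_top ENNReal.ofReal_ne_top,
        hCdef, hDdef, ENNReal.toReal_ofReal (by positivity), ENNReal.toReal_ofReal (by positivity),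
        ENNReal.toReal_ofReal hMμ0, ENNReal.toReal_ofReal hMν0]
    rw [h2] at h1
    exact h1
  refine hfinal.trans ?_
  have h2p : (2:ℝ) ^ p ≤ 2 ^ (p + 1) :=
    Real.rpow_le_rpow_of_exponent_le (by norm_num) (by linarith)
  have : 2 ^ p * t ^ (p - η) * (Mμ + Mν) ≤ 2 ^ (p + 1) * t ^ (p - η) * (Mμ + Mν) := by
    have ht' : (0:ℝ) ≤ t ^ (p - η) := Real.rpow_nonneg ht.le _
    have hS : (0:ℝ) ≤ Mμ + Mν := by linarith
    exact mul_le_mul_of_nonneg_right (mul_le_mul_of_nonneg_right h2p ht') hS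
  linarith
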